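/- Positive definiteness of 𝔸°(B) for nonnegative weights: let ν₁, ν₂, ν₃ ≥ 0 be real numbers, B a real symmetric positive definite 3×3 matrix, and define 𝔸°(B).D := D B + B D + (ν₁/2)(B [B,D] − [B,D] B) + (ν₂/2)(B² [B,D] − [B,D] B²) + (ν₃/2)(B² [B,D] B − B [B,D] B²) with [B,D] := B D − D B. Then ⟨𝔸°(B).D, D⟩ > 0 for every nonzero symmetric 3×3 matrix D. -/

import Mathlib

open Matrix

/-- The stiffness map `𝔸°(B)` acting on a symmetric matrix `D`. -/
noncomputable def Astiff (B : Matrix (Fin 3) (Fin 3) ℝ) (ν₁ ν₂ ν₃ : ℝ)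
    (D : Matrix (Fin 3) (Fin 3) ℝ) : Matrix (Fin 3) (Fin 3) ℝ :=
  D * B + B * D
    + (ν₁ / 2) • (B * (B * D - D * B) - (B * D - D * B) * B)
    + (ν₂ / 2) • (B ^ 2 * (B * D - D * B) - (B * D - D * B) * B ^ 2)
    + (ν₃ / 2) • (B ^ 2 * (B * D - D * B) * B - B * (B * D - D * B) * B ^ 2)

lemma trace_mul_transpose_eq (A : Matrix (Fin 3) (Fin 3) ℝ) :
    (A * Aᵀ).trace = ∑ i, ∑ j, (A i j)^2 := by
  simp [Matrix.trace, Matrix.mul_apply, Matrix.diag, sq]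

lemma trace_mul_transpose_nonneg (A : Matrix (Fin 3) (Fin 3) ℝ) :
    0 ≤ (A * Aᵀ).trace := by
  rw [trace_mul_transpose_eq]
  exact Finset.sum_nonneg fun i _ => Finset.sum_nonneg fun j _ => sq_nonneg _

lemma trace_mul_transpose_pos {A : Matrix (Fin 3) (Fin 3) ℝ} (hA : A ≠ 0) :
    0 < (A * Aᵀ).trace := by
  rw [trace_mul_transpose_eq]
  have hex : ∃ i j, A i j ≠ 0 := by
    by_contra h
    push_neg at h
    exact hA (by ext i j; simp [h])
  obtain ⟨i, j, hij⟩ := hex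
  refine Finset.sum_pos' (fun i _ => Finset.sum_nonneg fun j _ => sq_nonneg _)
    ⟨i, Finset.mem_univ i, Finset.sum_pos' (fun j _ => sq_nonneg _)
      ⟨j, Finset.mem_univ j, by positivity⟩⟩

/-- Positive definiteness of `𝔸°(B)` for nonnegative weights
`ν₁, ν₂, ν₃ ≥ 0`: `⟨𝔸°(B).D, D⟩ > 0` for every nonzero symmetric `D`. -/
theorem Astiff_posDef_of_nonneg_weights
    (ν₁ ν₂ ν₃ : ℝ) (hν₁ : 0 ≤ ν₁) (hν₂ : 0 ≤ ν₂) (hν₃ : 0 ≤ ν₃)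
    (B : Matrix (Fin 3) (Fin 3) ℝ) (hB : B.PosDef)
    (D : Matrix (Fin 3) (Fin 3) ℝ) (hD : Dᵀ = D) (hD0 : D ≠ 0) :
    0 < ((Astiff B ν₁ ν₂ ν₃ D) * Dᵀ).trace := by
  have hBt : Bᵀ = B := by
    have h := hB.isHermitian
    rwa [Matrix.IsHermitian, conjTranspose_eq_transpose_of_trivial] at h
  open scoped MatrixOrder in
  set S := CFC.sqrt B with hSdef
  open scoped MatrixOrder in
  have hSS : S * S = B := CFC.sqrt_mul_sqrt_self B hB.posSemidef.nonneg
  have hSt : Sᵀ = S := by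
    open scoped MatrixOrder in
    have h := (CFC.sqrt_nonneg B).posSemidef.isHermitian
    rwa [Matrix.IsHermitian, conjTranspose_eq_transpose_of_trivial] at h
  have hSdet : S.det ≠ 0 := by
    have hd : S.det * S.det = B.det := by rw [← det_mul, hSS]
    intro h
    rw [h, mul_zero] at hd
    exact (ne_of_gt hB.det_pos) hd.symm
  have hSD : S * D ≠ 0 := by
    intro h
    apply hD0
    calc D = S⁻¹ * (S * D) := by
            rw [← mul_assoc, Matrix.nonsing_inv_mul S (isUnit_iff_ne_zero.2 hSdet), one_mul]
      _ = 0 := by rw [h, mul_zero]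
  rw [hD]
  have total : ((Astiff B ν₁ ν₂ ν₃ D) * D).trace
      = 2 * (B * (D * D)).trace
        + ν₁ / 2 * (-(((B * D - D * B) * (B * D - D * B)).trace))
        + ν₂ / 2 * (-2 * ((B * ((B * D - D * B) * (B * D - D * B))).trace))
        + ν₃ / 2 * (-((B * (B * D - D * B) * B * (B * D - D * B)).trace)) := by
    simp only [Astiff, pow_two, Matrix.trace, Matrix.mul_apply, Matrix.diag_apply,
      Matrix.sub_apply, Matrix.add_apply, Matrix.smul_apply, Matrix.neg_apply,
      smul_eq_mul, Fin.sum_univ_three]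
    ring
  set C := B * D - D * B with hCdef
  have hCt : Cᵀ = -C := by
    rw [hCdef, transpose_sub, transpose_mul, transpose_mul, hBt, hD]
    exact (neg_sub _ _).symm
  have h0 : (B * (D * D)).trace = ((S * D) * (S * D)ᵀ).trace := by
    rw [transpose_mul, hSt, hD, ← hSS]
    simp only [Matrix.trace, Matrix.mul_apply, Matrix.diag_apply, Fin.sum_univ_three]
    ring
  have h1 : -((C * C).trace) = (C * Cᵀ).trace := by
    rw [hCt, mul_neg, trace_neg]
  have h2 : -((B * (C * C)).trace) = ((S * C) * (S * C)ᵀ).trace := by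
    rw [transpose_mul, hSt, hCt, ← hSS]
    simp only [Matrix.trace, Matrix.mul_apply, Matrix.diag_apply, Matrix.neg_apply,
      Fin.sum_univ_three]
    ring
  have h3 : -((B * C * B * C).trace) = ((S * C * S) * (S * C * S)ᵀ).trace := by
    rw [transpose_mul, transpose_mul, hSt, hCt, ← hSS]
    simp only [Matrix.trace, Matrix.mul_apply, Matrix.diag_apply, Matrix.neg_apply,
      Fin.sum_univ_three]
    ring
  rw [total, h0]
  have p0 : 0 < ((S * D) * (S * D)ᵀ).trace := trace_mul_transpose_pos hSD
  have p1 : 0 ≤ -((C * C).trace) := by rw [h1]; exact trace_mul_transpose_nonneg _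
  have p2 : 0 ≤ -((B * (C * C)).trace) := by
    rw [h2]; exact trace_mul_transpose_nonneg _
  have p3 : 0 ≤ -((B * C * B * C).trace) := by
    rw [h3]; exact trace_mul_transpose_nonneg _
  have q1 : 0 ≤ ν₁ / 2 * (-((C * C).trace)) := mul_nonneg (by linarith) p1
  have q2 : 0 ≤ ν₂ / 2 * (-2 * ((B * (C * C)).trace)) := by
    have : (-2 : ℝ) * ((B * (C * C)).trace) = 2 * (-((B * (C * C)).trace)) := by ring
    rw [this]
    exact mul_nonneg (by linarith) (by linarith)
  have q3 : 0 ≤ ν₃ / 2 * (-((B * C * B * C).trace)) := mul_nonneg (by linarith) p3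
  linarith
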